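/- Let p and q be distinct primes, let N = p·q, let m ≥ 2 be a natural number, and let a ∈ ℕ be coprime to N with (a : ZMod N) ≠ 1. Then the modular exponentiation map F : ZMod (2^m) × ZMod N → ZMod (2^m) × ZMod N defined by F(x, y) = (x, y + (a : ZMod N)^(x.val)) is not affine: there exist no additive automorphism α : (ZMod (2^m) × ZMod N) ≃+ (ZMod (2^m) × ZMod N) and no element t ∈ ZMod (2^m) × ZMod N such that F(x, y) = α(x, y) + t for all (x, y). -/

import Mathlib

/-- The modular exponentiation map `(x, y) ↦ (x, y + a^x)` on `ZMod (2^m) × ZMod N`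
(with `N = pq` a product of two distinct primes, `m ≥ 2`, `a` coprime to `N` and
`a ≢ 1 mod N`) is not an affine map `g ↦ α(g) + t`. -/
theorem stmt_18 (p q : ℕ) (hp : p.Prime) (hq : q.Prime) (hpq : p ≠ q)
    (N : ℕ) (hN : N = p * q) (m : ℕ) (hm : 2 ≤ m)
    (a : ℕ) (ha : Nat.Coprime a N) (ha1 : (a : ZMod N) ≠ 1) :
    ¬ ∃ (α : (ZMod (2 ^ m) × ZMod N) ≃+ (ZMod (2 ^ m) × ZMod N))
        (t : ZMod (2 ^ m) × ZMod N),
      ∀ (x : ZMod (2 ^ m)) (y : ZMod N),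
        (x, y + (a : ZMod N) ^ x.val) = α (x, y) + t := by
  rintro ⟨α, t, h⟩
  have h4 : (4 : ℕ) ≤ 2 ^ m := by
    calc (4:ℕ) = 2 ^ 2 := rfl
    _ ≤ 2 ^ m := Nat.pow_le_pow_right (by norm_num) hm
  have h1lt : 1 < 2 ^ m := by omega
  have hv1 : (1 : ZMod (2 ^ m)).val = 1 := ZMod.val_one_eq_one_mod (2^m) ▸ by
    haveI : NeZero (2^m) := ⟨by omega⟩
    exact ZMod.val_one_eq_one_mod (2^m) ▸ Nat.mod_eq_of_lt h1lt
  have hv2 : (2 : ZMod (2 ^ m)).val = 2 := by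
    haveI : NeZero (2^m) := ⟨by omega⟩
    have : ((2:ℕ) : ZMod (2^m)).val = 2 := ZMod.val_cast_of_lt (by omega)
    simpa using this
  have ht : t = (0, 1) := by
    have := h 0 0
    simp [ZMod.val_zero] at this
    rw [this, show ((0 : ZMod (2 ^ m)), (0 : ZMod N)) = 0 from rfl, map_zero, zero_add]
  have hadd : α (2, 0) = α (1, 0) + α (1, 0) := by
    rw [← map_add]; norm_num
  have e1 := h 1 0
  have e2 := h 2 0
  rw [ht, hv1] at e1
  rw [ht, hv2] at e2
  have hα1 : α (1, 0) = ((1 : ZMod (2^m)), (a : ZMod N) - 1) := by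
    have : ((1 : ZMod (2^m)), (0:ZMod N) + (a:ZMod N)^1) = α (1,0) + (0,1) := e1
    have h2 : α (1,0) = ((1 : ZMod (2^m)), (0:ZMod N) + (a:ZMod N)^1) - (0,1) := by
      rw [this]; ring
    rw [h2]; simp [Prod.ext_iff]
  have hα2 : α (2, 0) = ((2 : ZMod (2^m)), (a : ZMod N)^2 - 1) := by
    have h2 : α (2,0) = ((2 : ZMod (2^m)), (0:ZMod N) + (a:ZMod N)^2) - (0,1) := by
      rw [e2]; ring
    rw [h2]; simp [Prod.ext_iff]
  rw [hα1, hα2] at hadd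
  have key : ((a : ZMod N) - 1)^2 = 0 := by
    have := congrArg Prod.snd hadd
    simp at this
    ring_nf
    ring_nf at this
    linear_combination this
  haveI : Fact (Squarefree N) := ⟨by
    rw [hN]
    exact (Nat.squarefree_mul ((Nat.coprime_primes hp hq).mpr hpq)).mpr
      ⟨hp.squarefree, hq.squarefree⟩⟩
  have : (a : ZMod N) - 1 = 0 := by
    haveI : IsReduced (ZMod N) := inferInstance
    exact IsReduced.eq_zero _ ⟨2, key⟩
  exact ha1 (by linear_combination this)
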